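/- Fix M > 0 such that Λ := 2·G·Lip(V)·(M·T_max − 1 + e^{−M·T_max})/M² < 1. Let F, F′ ∈ 𝒫_{m,G} and let z* and z′* be, respectively, the unique solutions in C(𝒯) of z(t) = ∫₀ᵗ V(F(S_s(z))) ds and z(t) = ∫₀ᵗ V(F′(S_s(z))) ds. Then d_M(z′*, z*) ≤ (Lip(V)/(1 − Λ)) · ∫₀^{T_max} |F(S_s(z*)) − F′(S_s(z*))| ds. -/

import Mathlib

open MeasureTheory Set Filter

noncomputable section

/-- `Sset Td Xs z t` is the set `S_t(z)` of pairs (departure time, trip length) of the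
agents travelling at time `t` in a system with characteristic travel distance `z`:
`S_t(z) = {(τ, ξ) : τ ∈ [0,t] ∩ 𝒯_d, ξ ∈ (z(t) − z(τ), ∞) ∩ 𝒳}`. -/
def Sset (Td Xs : Set ℝ) (z : ℝ → ℝ) (t : ℝ) : Set (ℝ × ℝ) :=
  {p : ℝ × ℝ | p.1 ∈ Set.Icc 0 t ∩ Td ∧ p.2 ∈ Set.Ioi (z t - z p.1) ∩ Xs}

/-- `memP Td Xs Ta m G F` says that `F ∈ 𝒫_{m,G}`: `F` is a Borel probability measure
on `𝒯_d × 𝒳` with `F(B) ≤ G·λ₂(B)` for every Borel `B` and whose `𝒳`-marginal agrees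
with that of the demand profile `m`, i.e. `F(𝒯_d × Q) = m(Q × 𝒯_a)` for all Borel `Q`. -/
def memP (Td Xs Ta : Set ℝ) (m : Measure (ℝ × ℝ)) (G : ℝ) (F : Measure (ℝ × ℝ)) : Prop :=
  IsProbabilityMeasure F ∧ F ((Td ×ˢ Xs)ᶜ) = 0 ∧
    (∀ B : Set (ℝ × ℝ), MeasurableSet B → F B ≤ ENNReal.ofReal G * volume B) ∧
    ∀ Q : Set ℝ, MeasurableSet Q → F (Td ×ˢ Q) = m (Q ×ˢ Ta)

/-- The map `𝒰(z, F)(t) = ∫₀ᵗ V(F(S_s(z))) ds`. -/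
def Umap (Td Xs : Set ℝ) (V : ℝ → ℝ) (F : Measure (ℝ × ℝ)) (z : ℝ → ℝ) (t : ℝ) : ℝ :=
  ∫ s in (0:ℝ)..t, V ((F (Sset Td Xs z s)).toReal)

/-- The distance associated with the norm `‖u‖_M = sup_{t ∈ [0,Tmax]} e^{−Mt}|u(t)|`. -/
def dM (M Tmax : ℝ) (u w : ℝ → ℝ) : ℝ :=
  ⨆ t : Set.Icc (0:ℝ) Tmax, Real.exp (-(M * t.1)) * |u t.1 - w t.1|

lemma monoP : MonotoneOn (fun x : ℝ => x - 1 + Real.exp (-x)) (Set.Ici 0) := by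
  apply monotoneOn_of_deriv_nonneg (convex_Ici 0)
  · fun_prop
  · intro x hx
    apply DifferentiableAt.differentiableWithinAt
    fun_prop
  · intro x hx
    have hd : HasDerivAt (fun x : ℝ => x - 1 + Real.exp (-x)) (1 - Real.exp (-x)) x := by
      have h1 : HasDerivAt (fun x : ℝ => Real.exp (-x)) (-Real.exp (-x)) x := by
        exact ((Real.hasDerivAt_exp (-x)).comp x (hasDerivAt_neg x)).congr_deriv (by ring)
      exact (((hasDerivAt_id x).sub_const 1).add h1).congr_deriv (by ring)
    rw [hd.deriv]
    simp only [sub_nonneg]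
    exact Real.exp_le_one_iff.mpr (by simpa using (interior_subset (s := Set.Ici (0:ℝ)) hx : (0:ℝ) ≤ x))

lemma auxKey {x : ℝ} (hx : 0 ≤ x) :
    x * (1 - Real.exp (-x)) ≤ 2 * (x - 1 + Real.exp (-x)) := by
  have hmono : MonotoneOn (fun x : ℝ => x - 2 + (x + 2) * Real.exp (-x)) (Set.Ici 0) := by
    apply monotoneOn_of_deriv_nonneg (convex_Ici 0)
    · fun_prop
    · intro y hy
      apply DifferentiableAt.differentiableWithinAt
      fun_prop
    · intro y hy
      have h1 : HasDerivAt (fun x : ℝ => Real.exp (-x)) (-Real.exp (-y)) y := by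
        exact ((Real.hasDerivAt_exp (-y)).comp y (hasDerivAt_neg y)).congr_deriv (by ring)
      have hd : HasDerivAt (fun x : ℝ => x - 2 + (x + 2) * Real.exp (-x))
          (1 + (1 * Real.exp (-y) + (y + 2) * (-Real.exp (-y)))) y := by
        exact ((hasDerivAt_id y).sub_const 2).add (((hasDerivAt_id y).add_const 2).mul h1)
      rw [hd.deriv]
      have hy0 : (0:ℝ) ≤ y := by simpa using (interior_subset (s := Set.Ici (0:ℝ)) hy : (0:ℝ) ≤ y)
      have h2 : (y + 1) * Real.exp (-y) ≤ 1 := by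
        have h3 : Real.exp (-y) * Real.exp y = 1 := by rw [← Real.exp_add]; simp
        nlinarith [Real.add_one_le_exp y, Real.exp_pos (-y), h3]
      nlinarith [Real.exp_pos (-y)]
  have h0 := hmono (le_refl (0:ℝ)) hx hx
  norm_num at h0
  nlinarith [h0]


lemma measurable_meas_Sset {Td X : Set ℝ} (hTd : MeasurableSet Td) (hX : MeasurableSet X)
    {z : ℝ → ℝ} (hz : Continuous z) (μ : Measure (ℝ × ℝ)) [SFinite μ] :
    Measurable fun s => μ (Sset Td X z s) := by
  have hS : MeasurableSet {q : ℝ × ℝ × ℝ |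
      q.2.1 ∈ Set.Icc 0 q.1 ∩ Td ∧ q.2.2 ∈ Set.Ioi (z q.1 - z q.2.1) ∩ X} := by
    have h1 : MeasurableSet {q : ℝ × ℝ × ℝ | (0:ℝ) ≤ q.2.1} :=
      measurableSet_le measurable_const (measurable_fst.comp measurable_snd)
    have h2 : MeasurableSet {q : ℝ × ℝ × ℝ | q.2.1 ≤ q.1} :=
      measurableSet_le (measurable_fst.comp measurable_snd) measurable_fst
    have h3 : MeasurableSet {q : ℝ × ℝ × ℝ | q.2.1 ∈ Td} :=
      (measurable_fst.comp measurable_snd) hTd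
    have h4 : MeasurableSet {q : ℝ × ℝ × ℝ | z q.1 - z q.2.1 < q.2.2} :=
      measurableSet_lt (((hz.comp continuous_fst).sub
        (hz.comp (continuous_fst.comp continuous_snd))).measurable)
        (measurable_snd.comp measurable_snd)
    have h5 : MeasurableSet {q : ℝ × ℝ × ℝ | q.2.2 ∈ X} :=
      (measurable_snd.comp measurable_snd) hX
    have : {q : ℝ × ℝ × ℝ |
        q.2.1 ∈ Set.Icc 0 q.1 ∩ Td ∧ q.2.2 ∈ Set.Ioi (z q.1 - z q.2.1) ∩ X}
        = ({q : ℝ × ℝ × ℝ | (0:ℝ) ≤ q.2.1} ∩ {q | q.2.1 ≤ q.1} ∩ {q | q.2.1 ∈ Td})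
          ∩ ({q | z q.1 - z q.2.1 < q.2.2} ∩ {q | q.2.2 ∈ X}) := by
      ext q; simp [Set.mem_Icc, Set.mem_Ioi, and_assoc]
    rw [this]
    exact ((h1.inter h2).inter h3).inter (h4.inter h5)
  exact measurable_measure_prodMk_left hS

lemma measurableSet_Sset {Td X : Set ℝ} (hTd : MeasurableSet Td) (hX : MeasurableSet X)
    {z : ℝ → ℝ} (hz : Continuous z) (s : ℝ) : MeasurableSet (Sset Td X z s) := by
  have h1 : MeasurableSet {p : ℝ × ℝ | p.1 ∈ Set.Icc 0 s} := measurable_fst measurableSet_Icc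
  have h3 : MeasurableSet {p : ℝ × ℝ | p.1 ∈ Td} := measurable_fst hTd
  have h4 : MeasurableSet {p : ℝ × ℝ | z s - z p.1 < p.2} :=
    measurableSet_lt ((continuous_const.sub (hz.comp continuous_fst)).measurable) measurable_snd
  have h5 : MeasurableSet {p : ℝ × ℝ | p.2 ∈ X} := measurable_snd hX
  have : Sset Td X z s = ({p : ℝ × ℝ | p.1 ∈ Set.Icc 0 s} ∩ {p | p.1 ∈ Td})
      ∩ ({p | z s - z p.1 < p.2} ∩ {p | p.2 ∈ X}) := by
    ext p; simp [Sset, Set.mem_Ioi, and_assoc]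
  rw [this]; exact (h1.inter h3).inter (h4.inter h5)

lemma meas_Sset_sdiff_le {Td X : Set ℝ}
    (μ : Measure (ℝ × ℝ)) {G : ℝ} (hG : 0 ≤ G)
    (hμG : ∀ B : Set (ℝ × ℝ), MeasurableSet B → μ B ≤ ENNReal.ofReal G * volume B)
    {z z' : ℝ → ℝ} (hz : Continuous z) (hz' : Continuous z')
    {s : ℝ} (hs : 0 ≤ s) {c : ℝ → ℝ} (hc : Continuous c)
    (hcb : ∀ τ ∈ Set.Icc 0 s, (z s - z τ) - (z' s - z' τ) ≤ c τ)
    (hc0 : ∀ τ, 0 ≤ c τ) :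
    μ (Sset Td X z' s \ Sset Td X z s) ≤ ENNReal.ofReal (G * ∫ τ in (0:ℝ)..s, c τ) := by
  set W : Set (ℝ × ℝ) :=
    {p : ℝ × ℝ | p.1 ∈ Set.Icc 0 s ∧ p.2 ∈ Set.Ioc (z' s - z' p.1) (z s - z p.1)} with hW
  have hsub : Sset Td X z' s \ Sset Td X z s ⊆ W := by
    rintro p ⟨⟨⟨hp1, hp1d⟩, hp2⟩, hpB⟩
    refine ⟨hp1, ?_, ?_⟩
    · exact hp2.1
    · by_contra h
      exact hpB ⟨⟨hp1, hp1d⟩, ⟨lt_of_not_ge h, hp2.2⟩⟩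
  have hWm : MeasurableSet W := by
    have h1 : MeasurableSet {p : ℝ × ℝ | p.1 ∈ Set.Icc 0 s} := measurable_fst measurableSet_Icc
    have h2 : MeasurableSet {p : ℝ × ℝ | z' s - z' p.1 < p.2} :=
      measurableSet_lt ((continuous_const.sub (hz'.comp continuous_fst)).measurable) measurable_snd
    have h3 : MeasurableSet {p : ℝ × ℝ | p.2 ≤ z s - z p.1} :=
      measurableSet_le measurable_snd ((continuous_const.sub (hz.comp continuous_fst)).measurable)
    have : W = {p : ℝ × ℝ | p.1 ∈ Set.Icc 0 s} ∩ ({p | z' s - z' p.1 < p.2} ∩ {p | p.2 ≤ z s - z p.1}) := by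
      ext p; simp [hW, Set.mem_Ioc, and_assoc]
    rw [this]; exact h1.inter (h2.inter h3)
  have hvolW : volume W ≤ ENNReal.ofReal (∫ τ in (0:ℝ)..s, c τ) := by
    have hprod : volume W = ∫⁻ τ, volume (Prod.mk τ ⁻¹' W) := by
      rw [MeasureTheory.Measure.volume_eq_prod, Measure.prod_apply hWm]
    rw [hprod]
    have hle : (fun τ => volume (Prod.mk τ ⁻¹' W))
        ≤ fun τ => (Set.Icc (0:ℝ) s).indicator (fun τ => ENNReal.ofReal (c τ)) τ := by
      intro τ
      dsimp only
      by_cases hτ : τ ∈ Set.Icc (0:ℝ) s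
      · have hpre : Prod.mk τ ⁻¹' W = Set.Ioc (z' s - z' τ) (z s - z τ) := by
          ext ξ; simp [hW, Set.mem_Icc, hτ.1, hτ.2]
        rw [hpre, Set.indicator_of_mem hτ, Real.volume_Ioc]
        exact ENNReal.ofReal_le_ofReal (by linarith [hcb τ hτ])
      · have hpre : Prod.mk τ ⁻¹' W = ∅ := by
          ext ξ
          simp only [Set.mem_preimage, Set.mem_empty_iff_false, iff_false, hW,
            Set.mem_setOf_eq, not_and]
          intro h
          exact absurd h hτ
        rw [hpre, Set.indicator_of_notMem hτ]
        simp
    refine le_trans (lintegral_mono hle) ?_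
    rw [lintegral_indicator measurableSet_Icc]
    rw [← ofReal_integral_eq_lintegral_ofReal (hc.integrableOn_Icc)
      (Eventually.of_forall fun τ => hc0 τ)]
    apply ENNReal.ofReal_le_ofReal
    rw [intervalIntegral.integral_of_le hs, ← integral_Icc_eq_integral_Ioc]
  calc μ (Sset Td X z' s \ Sset Td X z s) ≤ μ W := measure_mono hsub
    _ ≤ ENNReal.ofReal G * volume W := hμG W hWm
    _ ≤ ENNReal.ofReal G * ENNReal.ofReal (∫ τ in (0:ℝ)..s, c τ) := by gcongr
    _ = ENNReal.ofReal (G * ∫ τ in (0:ℝ)..s, c τ) := (ENNReal.ofReal_mul hG).symm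

lemma abs_meas_Sset_diff_le {Td X : Set ℝ}
    (μ : Measure (ℝ × ℝ)) [IsProbabilityMeasure μ] {G : ℝ} (hG : 0 ≤ G)
    (hμG : ∀ B : Set (ℝ × ℝ), MeasurableSet B → μ B ≤ ENNReal.ofReal G * volume B)
    {z z' : ℝ → ℝ} (hz : Continuous z) (hz' : Continuous z')
    {s : ℝ} (hs : 0 ≤ s) {c : ℝ → ℝ} (hc : Continuous c)
    (hcb : ∀ τ ∈ Set.Icc 0 s, |(z' s - z' τ) - (z s - z τ)| ≤ c τ)
    (hc0 : ∀ τ, 0 ≤ c τ) :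
    |(μ (Sset Td X z' s)).toReal - (μ (Sset Td X z s)).toReal|
      ≤ G * ∫ τ in (0:ℝ)..s, c τ := by
  have hint_nonneg : 0 ≤ ∫ τ in (0:ℝ)..s, c τ :=
    intervalIntegral.integral_nonneg hs (fun τ _ => hc0 τ)
  have hGI : 0 ≤ G * ∫ τ in (0:ℝ)..s, c τ := mul_nonneg hG hint_nonneg
  have h1 : μ (Sset Td X z' s \ Sset Td X z s) ≤ ENNReal.ofReal (G * ∫ τ in (0:ℝ)..s, c τ) :=
    meas_Sset_sdiff_le μ hG hμG hz hz' hs hc (fun τ hτ => by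
      have h2 : -((z' s - z' τ) - (z s - z τ)) ≤ |(z' s - z' τ) - (z s - z τ)| := neg_le_abs _
      linarith [hcb τ hτ]) hc0
  have h2 : μ (Sset Td X z s \ Sset Td X z' s) ≤ ENNReal.ofReal (G * ∫ τ in (0:ℝ)..s, c τ) :=
    meas_Sset_sdiff_le μ hG hμG hz' hz hs hc (fun τ hτ => by
      have h2 : ((z' s - z' τ) - (z s - z τ)) ≤ |(z' s - z' τ) - (z s - z τ)| := le_abs_self _
      linarith [hcb τ hτ]) hc0
  have hfinA : μ (Sset Td X z' s) ≠ ⊤ := measure_ne_top μ _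
  have hfinB : μ (Sset Td X z s) ≠ ⊤ := measure_ne_top μ _
  rw [abs_sub_le_iff]
  constructor
  · have hA : μ (Sset Td X z' s) ≤ μ (Sset Td X z s) + μ (Sset Td X z' s \ Sset Td X z s) :=
      le_trans (measure_mono (by intro p hp; by_cases h : p ∈ Sset Td X z s
                                 · exact Set.mem_union_left _ h
                                 · exact Set.mem_union_right _ ⟨hp, h⟩)) (measure_union_le _ _)
    have := ENNReal.toReal_mono (by finiteness) (le_trans hA (add_le_add le_rfl h1))
    rw [ENNReal.toReal_add hfinB (by finiteness)] at this
    rw [ENNReal.toReal_ofReal hGI] at this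
    linarith
  · have hA : μ (Sset Td X z s) ≤ μ (Sset Td X z' s) + μ (Sset Td X z s \ Sset Td X z' s) :=
      le_trans (measure_mono (by intro p hp; by_cases h : p ∈ Sset Td X z' s
                                 · exact Set.mem_union_left _ h
                                 · exact Set.mem_union_right _ ⟨hp, h⟩)) (measure_union_le _ _)
    have := ENNReal.toReal_mono (by finiteness) (le_trans hA (add_le_add le_rfl h2))
    rw [ENNReal.toReal_add hfinA (by finiteness)] at this
    rw [ENNReal.toReal_ofReal hGI] at this
    linarith



set_option maxHeartbeats 1000000 in
/-- proof of Proposition 4: stability bound for the characteristic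
travel distance. If `Λ := 2·G·Lip(V)·(M·Tmax − 1 + e^{−M·Tmax})/M² < 1` and
`z*, z′*` are the characteristic travel distances associated with `F, F′ ∈ 𝒫_{m,G}`,
then `d_M(z′*, z*) ≤ (Lip(V)/(1 − Λ)) · ∫₀^{Tmax} |F(S_s(z*)) − F′(S_s(z*))| ds`. -/
theorem characteristic_travel_distance_stability_bound
    (Tmax Xmin Xmax G : ℝ) (hT : 0 < Tmax) (hXmin : 0 < Xmin) (hXX : Xmin < Xmax)
    (hG : 0 < G)
    (Td Ta : Set ℝ) (hTdc : IsCompact Td) (hTd : Td ⊆ Set.Icc 0 Tmax)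
    (hTac : IsCompact Ta) (hTa : Ta ⊆ Set.Icc 0 Tmax)
    (m : Measure (ℝ × ℝ)) (hm : IsProbabilityMeasure m)
    (V : ℝ → ℝ) (LV : NNReal) (hV : LipschitzOnWith LV V (Set.Ici 0))
    (hVpos : ∀ c : ℝ, 0 ≤ c → 0 < V c)
    (M : ℝ) (hM : 0 < M)
    (hΛ : 2 * G * (LV : ℝ) * (M * Tmax - 1 + Real.exp (-(M * Tmax))) / M ^ 2 < 1)
    (F F' : Measure (ℝ × ℝ))
    (hF : memP Td (Set.Icc Xmin Xmax) Ta m G F)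
    (hF' : memP Td (Set.Icc Xmin Xmax) Ta m G F')
    (zs zs' : ℝ → ℝ) (hzs : Continuous zs) (hzs' : Continuous zs')
    (hfix : ∀ t ∈ Set.Icc (0:ℝ) Tmax, zs t = Umap Td (Set.Icc Xmin Xmax) V F zs t)
    (hfix' : ∀ t ∈ Set.Icc (0:ℝ) Tmax, zs' t = Umap Td (Set.Icc Xmin Xmax) V F' zs' t) :
    dM M Tmax zs' zs
      ≤ ((LV : ℝ) /
            (1 - 2 * G * (LV : ℝ) * (M * Tmax - 1 + Real.exp (-(M * Tmax))) / M ^ 2))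
          * ∫ s in (0:ℝ)..Tmax,
              |(F (Sset Td (Set.Icc Xmin Xmax) zs s)).toReal
                - (F' (Sset Td (Set.Icc Xmin Xmax) zs s)).toReal| := by
  obtain ⟨hFp, hFsupp, hFG, hFm⟩ := hF
  obtain ⟨hF'p, hF'supp, hF'G, hF'm⟩ := hF'
  have hK0 : (0:ℝ) ≤ (LV : ℝ) := LV.coe_nonneg
  set X : Set ℝ := Set.Icc Xmin Xmax with hXdef
  set K : ℝ := (LV : ℝ) with hKdef
  set P : ℝ := M * Tmax - 1 + Real.exp (-(M * Tmax)) with hPdef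
  set Λ : ℝ := 2 * G * K * P / M ^ 2 with hΛdef
  have hTdm : MeasurableSet Td := hTdc.measurableSet
  have hXm : MeasurableSet X := measurableSet_Icc
  have hP0 : 0 ≤ P := by
    have := monoP (Set.self_mem_Ici) (by positivity : (0:ℝ) ≤ M * Tmax)
      (by positivity : (0:ℝ) ≤ M * Tmax)
    simpa using this
  have hΛ0 : 0 ≤ Λ := by
    rw [hΛdef]; positivity
  have h1Λ : 0 < 1 - Λ := by linarith
  -- the three measure functions
  set a : ℝ → ℝ := fun s => (F (Sset Td X zs s)).toReal with ha_def
  set a'' : ℝ → ℝ := fun s => (F' (Sset Td X zs s)).toReal with ha''_def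
  set a' : ℝ → ℝ := fun s => (F' (Sset Td X zs' s)).toReal with ha'_def
  have haM : Measurable a := (measurable_meas_Sset hTdm hXm hzs F).ennreal_toReal
  have ha''M : Measurable a'' := (measurable_meas_Sset hTdm hXm hzs F').ennreal_toReal
  have ha'M : Measurable a' := (measurable_meas_Sset hTdm hXm hzs' F').ennreal_toReal
  have hbound : ∀ (μ : Measure (ℝ × ℝ)), IsProbabilityMeasure μ →
      ∀ B : Set (ℝ × ℝ), (μ B).toReal ∈ Set.Icc (0:ℝ) 1 := by
    intro μ hμ B
    refine ⟨ENNReal.toReal_nonneg, ?_⟩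
    have h := prob_le_one (μ := μ) (s := B)
    have := ENNReal.toReal_mono (by simp) h
    simpa using this
  have ha01 : ∀ s, a s ∈ Set.Icc (0:ℝ) 1 := fun s => hbound F hFp _
  have ha''01 : ∀ s, a'' s ∈ Set.Icc (0:ℝ) 1 := fun s => hbound F' hF'p _
  have ha'01 : ∀ s, a' s ∈ Set.Icc (0:ℝ) 1 := fun s => hbound F' hF'p _
  -- the truncated speed function
  set Vt : ℝ → ℝ := fun x => V (max x 0) with hVt_def
  have hVt_cont : Continuous Vt :=
    hV.continuousOn.comp_continuous (continuous_id.max continuous_const)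
      (fun x => le_max_right x 0)
  have hVt_eq : ∀ x : ℝ, 0 ≤ x → Vt x = V x := fun x hx => by
    simp [hVt_def, max_eq_left hx]
  have hVlip : ∀ x y : ℝ, 0 ≤ x → 0 ≤ y → |V x - V y| ≤ K * |x - y| := by
    intro x y hx hy
    have := hV.dist_le_mul x hx y hy
    simpa [Real.dist_eq, hKdef] using this
  have hVt_bd : ∀ x ∈ Set.Icc (0:ℝ) 1, |V x| ≤ |V 0| + K := by
    intro x hx
    have h := hVlip x 0 hx.1 le_rfl
    have : |V x| - |V 0| ≤ |V x - V 0| := by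
      have := abs_sub_abs_le_abs_sub (V x) (V 0); linarith
    have hx1 : |x - 0| ≤ 1 := by rw [sub_zero, abs_of_nonneg hx.1]; exact hx.2
    nlinarith [hK0]
  -- integrability helper
  have hII : ∀ (f : ℝ → ℝ) (C : ℝ), Measurable f → (∀ s, |f s| ≤ C) →
      ∀ u v : ℝ, IntervalIntegrable f volume u v := by
    intro f C hf hC u v
    rw [intervalIntegrable_iff]
    refine Integrable.mono' (g := fun _ => C) ?_ hf.aestronglyMeasurable
      (Eventually.of_forall fun s => by simpa using hC s)
    refine (integrableOn_const_iff).mpr (Or.inr ?_)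
    rw [Set.uIoc_eq_union]
    refine lt_of_le_of_lt (measure_union_le _ _) ?_
    rw [Real.volume_Ioc, Real.volume_Ioc]
    exact ENNReal.add_lt_top.mpr ⟨ENNReal.ofReal_lt_top, ENNReal.ofReal_lt_top⟩
  have hVa_eq : ∀ s, V (a s) = Vt (a s) := fun s => (hVt_eq _ (ha01 s).1).symm
  have hVa'_eq : ∀ s, V (a' s) = Vt (a' s) := fun s => (hVt_eq _ (ha'01 s).1).symm
  have hIa : ∀ u v : ℝ, IntervalIntegrable (fun s => V (a s)) volume u v := by
    intro u v
    have : (fun s => V (a s)) = fun s => Vt (a s) := funext hVa_eq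
    rw [this]
    exact hII _ (|V 0| + K) (hVt_cont.measurable.comp haM)
      (fun s => by
        show |Vt (a s)| ≤ |V 0| + K
        rw [hVt_eq _ (ha01 s).1]; exact hVt_bd _ (ha01 s)) u v
  have hIa' : ∀ u v : ℝ, IntervalIntegrable (fun s => V (a' s)) volume u v := by
    intro u v
    have : (fun s => V (a' s)) = fun s => Vt (a' s) := funext hVa'_eq
    rw [this]
    exact hII _ (|V 0| + K) (hVt_cont.measurable.comp ha'M)
      (fun s => by
        show |Vt (a' s)| ≤ |V 0| + K
        rw [hVt_eq _ (ha'01 s).1]; exact hVt_bd _ (ha'01 s)) u v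
  set b : ℝ → ℝ := fun s => |a s - a'' s| with hb_def
  have hbM : Measurable b := (haM.sub ha''M).abs
  have hb0 : ∀ s, 0 ≤ b s := fun s => abs_nonneg _
  have hIb : ∀ u v : ℝ, IntervalIntegrable b volume u v := by
    refine hII b 2 hbM fun s => ?_
    have h1 := ha01 s; have h2 := ha''01 s
    show |(|a s - a'' s|)| ≤ 2
    rw [abs_abs, abs_sub_le_iff]
    constructor <;> nlinarith [h1.1, h1.2, h2.1, h2.2]
  set I : ℝ := ∫ s in (0:ℝ)..Tmax,
      |(F (Sset Td X zs s)).toReal - (F' (Sset Td X zs s)).toReal| with hI_def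
  have hIeq : I = ∫ s in (0:ℝ)..Tmax, b s := rfl
  have hI0 : 0 ≤ I := by
    rw [hIeq]
    exact intervalIntegral.integral_nonneg hT.le fun s _ => hb0 s
  -- the sup machinery
  haveI : Nonempty (Set.Icc (0:ℝ) Tmax) := ⟨⟨0, le_refl 0, hT.le⟩⟩
  haveI : CompactSpace (Set.Icc (0:ℝ) Tmax) := isCompact_iff_compactSpace.mp isCompact_Icc
  set D : ℝ := dM M Tmax zs' zs with hD_def
  have hcontf : Continuous (fun t : Set.Icc (0:ℝ) Tmax =>
      Real.exp (-(M * t.1)) * |zs' t.1 - zs t.1|) := by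
    apply Continuous.mul
    · exact (Real.continuous_exp.comp (continuous_const.mul continuous_subtype_val).neg)
    · exact ((hzs'.sub hzs).abs).comp continuous_subtype_val
  have hbdd : BddAbove (Set.range fun t : Set.Icc (0:ℝ) Tmax =>
      Real.exp (-(M * t.1)) * |zs' t.1 - zs t.1|) := (isCompact_range hcontf).bddAbove
  have hDle : ∀ τ : ℝ, ∀ _ : τ ∈ Set.Icc (0:ℝ) Tmax,
      Real.exp (-(M * τ)) * |zs' τ - zs τ| ≤ D := by
    intro τ hτ
    exact le_ciSup hbdd (⟨τ, hτ⟩ : Set.Icc (0:ℝ) Tmax)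
  have hD0 : 0 ≤ D := le_trans (by positivity) (hDle 0 ⟨le_refl 0, hT.le⟩)
  have he_le : ∀ τ ∈ Set.Icc (0:ℝ) Tmax, |zs' τ - zs τ| ≤ D * Real.exp (M * τ) := by
    intro τ hτ
    have h := hDle τ hτ
    have hpos : (0:ℝ) < Real.exp (M * τ) := Real.exp_pos _
    have hinv : Real.exp (-(M * τ)) = (Real.exp (M * τ))⁻¹ := by rw [Real.exp_neg]
    rw [hinv] at h
    calc |zs' τ - zs τ| = Real.exp (M * τ) * ((Real.exp (M * τ))⁻¹ * |zs' τ - zs τ|) := by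
          field_simp
      _ ≤ Real.exp (M * τ) * D := by
          apply mul_le_mul_of_nonneg_left h hpos.le
      _ = D * Real.exp (M * τ) := mul_comm _ _
  -- key measure-difference estimate
  have hdiff : ∀ s ∈ Set.Icc (0:ℝ) Tmax,
      |a' s - a'' s| ≤ G * (D * (s * Real.exp (M * s)) + D * ((Real.exp (M * s) - 1) / M)) := by
    intro s hs
    have hc0 : ∀ τ : ℝ, 0 ≤ D * Real.exp (M * s) + D * Real.exp (M * τ) := by
      intro τ; positivity
    have hcb : ∀ τ ∈ Set.Icc 0 s, |(zs' s - zs' τ) - (zs s - zs τ)|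
        ≤ D * Real.exp (M * s) + D * Real.exp (M * τ) := by
      intro τ hτ
      have hτT : τ ∈ Set.Icc (0:ℝ) Tmax := ⟨hτ.1, hτ.2.trans hs.2⟩
      have h1 := he_le s hs
      have h2 := he_le τ hτT
      have : |(zs' s - zs' τ) - (zs s - zs τ)| ≤ |zs' s - zs s| + |zs' τ - zs τ| := by
        rw [show (zs' s - zs' τ) - (zs s - zs τ) = (zs' s - zs s) - (zs' τ - zs τ) by ring]
        exact abs_sub _ _
      linarith
    have hest := abs_meas_Sset_diff_le (Td := Td) (X := X) F' hG.le hF'G hzs hzs' hs.1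
      (c := fun τ => D * Real.exp (M * s) + D * Real.exp (M * τ)) (by fun_prop) hcb hc0
    have hcalc : ∫ τ in (0:ℝ)..s, (D * Real.exp (M * s) + D * Real.exp (M * τ))
        = D * (s * Real.exp (M * s)) + D * ((Real.exp (M * s) - 1) / M) := by
      have hderiv : ∀ τ ∈ Set.uIcc (0:ℝ) s,
          HasDerivAt (fun τ => D * Real.exp (M * s) * τ + (D / M) * Real.exp (M * τ))
            (D * Real.exp (M * s) + D * Real.exp (M * τ)) τ := by
        intro τ _
        have h1 : HasDerivAt (fun τ : ℝ => D * Real.exp (M * s) * τ)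
            (D * Real.exp (M * s)) τ := by
          simpa using (hasDerivAt_id τ).const_mul (D * Real.exp (M * s))
        have h2 : HasDerivAt (fun τ : ℝ => Real.exp (M * τ)) (Real.exp (M * τ) * M) τ := by
          exact ((Real.hasDerivAt_exp (M * τ)).comp τ ((hasDerivAt_id τ).const_mul M)).congr_deriv (by simp)
        have h3 := h1.add (h2.const_mul (D / M))
        convert h3 using 1
        · rfl
        · rfl
        · rfl
        field_simp [hM.ne']
      have hcont1 : Continuous (fun τ : ℝ => D * Real.exp (M * s) + D * Real.exp (M * τ)) := by
        fun_prop
      rw [intervalIntegral.integral_eq_sub_of_hasDerivAt hderiv (hcont1.intervalIntegrable 0 s)]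
      simp only [mul_zero, Real.exp_zero]
      field_simp
      ring
    rw [hcalc] at hest
    exact hest
  -- the two fixed-point identities
  have hzz : ∀ t ∈ Set.Icc (0:ℝ) Tmax,
      zs' t - zs t = ∫ s in (0:ℝ)..t, (V (a' s) - V (a s)) := by
    intro t ht
    have h1 : zs t = ∫ s in (0:ℝ)..t, V (a s) := hfix t ht
    have h2 : zs' t = ∫ s in (0:ℝ)..t, V (a' s) := hfix' t ht
    rw [h1, h2, intervalIntegral.integral_sub (hIa' 0 t) (hIa 0 t)]
  -- main pointwise estimate
  have hmain : ∀ t ∈ Set.Icc (0:ℝ) Tmax,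
      Real.exp (-(M * t)) * |zs' t - zs t| ≤ Λ * D + K * I := by
    intro t ht
    set g : ℝ → ℝ := fun s =>
      K * (G * (D * (s * Real.exp (M * s)) + D * ((Real.exp (M * s) - 1) / M))) + K * b s
      with hg_def
    have hcont2 : Continuous (fun s : ℝ =>
        K * (G * (D * (s * Real.exp (M * s)) + D * ((Real.exp (M * s) - 1) / M)))) := by
      fun_prop
    have hIg : IntervalIntegrable g volume 0 t := by
      apply IntervalIntegrable.add
      · exact hcont2.intervalIntegrable 0 t
      · exact (hIb 0 t).const_mul K
    have h1 : |zs' t - zs t| ≤ ∫ s in (0:ℝ)..t, g s := by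
      rw [hzz t ht]
      refine le_trans (intervalIntegral.abs_integral_le_integral_abs ht.1) ?_
      refine intervalIntegral.integral_mono_on ht.1 ?_ hIg ?_
      · exact ((hIa' 0 t).sub (hIa 0 t)).abs
      · intro s hst
        have hsT : s ∈ Set.Icc (0:ℝ) Tmax := ⟨hst.1, hst.2.trans ht.2⟩
        have hL : |V (a' s) - V (a s)| ≤ K * |a' s - a s| :=
          hVlip _ _ (ha'01 s).1 (ha01 s).1
        have htri : |a' s - a s| ≤ |a' s - a'' s| + b s := by
          rw [hb_def]
          calc |a' s - a s| = |(a' s - a'' s) + (a'' s - a s)| := by ring_nf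
            _ ≤ |a' s - a'' s| + |a'' s - a s| := abs_add_le _ _
            _ = |a' s - a'' s| + |a s - a'' s| := by rw [abs_sub_comm (a'' s)]
        have hd := hdiff s hsT
        have hKmul : K * |a' s - a s| ≤ K * (|a' s - a'' s| + b s) :=
          mul_le_mul_of_nonneg_left htri hK0
        have hKmul2 : K * |a' s - a'' s|
            ≤ K * (G * (D * (s * Real.exp (M * s)) + D * ((Real.exp (M * s) - 1) / M))) :=
          mul_le_mul_of_nonneg_left hd hK0
        rw [hg_def]
        simp only []
        nlinarith [hK0, hb0 s]
    -- compute the first part of the integral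
    have hcalc2 : ∫ s in (0:ℝ)..t,
        K * (G * (D * (s * Real.exp (M * s)) + D * ((Real.exp (M * s) - 1) / M)))
        = K * G * D * (t * Real.exp (M * t) - t) / M := by
      have hderiv : ∀ s ∈ Set.uIcc (0:ℝ) t,
          HasDerivAt (fun s => K * G * D * (s * Real.exp (M * s) - s) / M)
            (K * (G * (D * (s * Real.exp (M * s)) + D * ((Real.exp (M * s) - 1) / M)))) s := by
        intro s _
        have h2 : HasDerivAt (fun s : ℝ => Real.exp (M * s)) (Real.exp (M * s) * M) s := by
          exact ((Real.hasDerivAt_exp (M * s)).comp s ((hasDerivAt_id s).const_mul M)).congr_deriv (by simp)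
        have h3 : HasDerivAt (fun s : ℝ => s * Real.exp (M * s))
            (1 * Real.exp (M * s) + s * (Real.exp (M * s) * M)) s :=
          (hasDerivAt_id s).mul h2
        have h4 := (h3.sub (hasDerivAt_id s)).const_mul (K * G * D / M)
        convert h4 using 1
        · rfl
        · rfl
        · funext u; simp only [Pi.sub_apply, id_eq]; ring
        · field_simp [hM.ne']
          ring
      rw [intervalIntegral.integral_eq_sub_of_hasDerivAt hderiv (hcont2.intervalIntegrable 0 t)]
      ring
    have h2 : ∫ s in (0:ℝ)..t, g s
        = K * G * D * (t * Real.exp (M * t) - t) / M + K * ∫ s in (0:ℝ)..t, b s := by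
      rw [hg_def]
      rw [intervalIntegral.integral_add (hcont2.intervalIntegrable 0 t)
        ((hIb 0 t).const_mul K)]
      rw [hcalc2, intervalIntegral.integral_const_mul]
    have h3 : ∫ s in (0:ℝ)..t, b s ≤ I := by
      rw [hIeq]
      exact intervalIntegral.integral_mono_interval (le_refl (0:ℝ)) ht.1 ht.2
        (Eventually.of_forall fun s => hb0 s) (hIb 0 Tmax)
    -- numeric part
    have hx0 : 0 ≤ M * t := mul_nonneg hM.le ht.1
    have hE0 : (0:ℝ) < Real.exp (-(M * t)) := Real.exp_pos _
    have hexpinv : Real.exp (-(M * t)) * Real.exp (M * t) = 1 := by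
      rw [← Real.exp_add]; simp
    have hkey := auxKey hx0
    have hmonoP : M * t - 1 + Real.exp (-(M * t)) ≤ P := by
      rw [hPdef]
      exact monoP (Set.mem_Ici.mpr hx0)
        (Set.mem_Ici.mpr (by positivity : (0:ℝ) ≤ M * Tmax))
        (mul_le_mul_of_nonneg_left ht.2 hM.le)
    have hchain : |zs' t - zs t| ≤ K * G * D * (t * Real.exp (M * t) - t) / M + K * I := by
      have h4 : K * (∫ s in (0:ℝ)..t, b s) ≤ K * I := mul_le_mul_of_nonneg_left h3 hK0
      rw [h2] at h1
      linarith
    have hEmul : Real.exp (-(M * t)) * |zs' t - zs t|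
        ≤ Real.exp (-(M * t)) * (K * G * D * (t * Real.exp (M * t) - t) / M) + K * I := by
      have hKI0 : 0 ≤ K * I := mul_nonneg hK0 hI0
      calc Real.exp (-(M * t)) * |zs' t - zs t|
          ≤ Real.exp (-(M * t)) * (K * G * D * (t * Real.exp (M * t) - t) / M + K * I) :=
            mul_le_mul_of_nonneg_left hchain hE0.le
        _ = Real.exp (-(M * t)) * (K * G * D * (t * Real.exp (M * t) - t) / M)
            + Real.exp (-(M * t)) * (K * I) := mul_add _ _ _
        _ ≤ Real.exp (-(M * t)) * (K * G * D * (t * Real.exp (M * t) - t) / M) + K * I := by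
            have hE1 : Real.exp (-(M * t)) ≤ 1 := Real.exp_le_one_iff.mpr (by linarith)
            nlinarith [hKI0]
    have hsimp : Real.exp (-(M * t)) * (K * G * D * (t * Real.exp (M * t) - t) / M)
        = K * G * D * ((M * t) * (1 - Real.exp (-(M * t)))) / M ^ 2 := by
      have hMne : M ≠ 0 := hM.ne'
      field_simp
      linear_combination (K * D * t) * hexpinv
    have hfinal1 : K * G * D * ((M * t) * (1 - Real.exp (-(M * t)))) / M ^ 2 ≤ Λ * D := by
      have hc : (M * t) * (1 - Real.exp (-(M * t))) ≤ 2 * P := by linarith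
      have h5 : K * G * D * ((M * t) * (1 - Real.exp (-(M * t)))) ≤ K * G * D * (2 * P) :=
        mul_le_mul_of_nonneg_left hc (by positivity)
      rw [hΛdef, div_mul_eq_mul_div, div_le_div_iff₀ (by positivity) (by positivity :
        (0:ℝ) < M ^ 2)]
      nlinarith [h5, sq_nonneg M]
    linarith [hEmul, hsimp ▸ hfinal1]
  -- conclude
  have hsup : D ≤ Λ * D + K * I := ciSup_le fun t => hmain t.1 t.2
  have hgoal : D ≤ K / (1 - Λ) * I := by
    rw [div_mul_eq_mul_div, le_div_iff₀ h1Λ]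
    nlinarith [hsup]
  exact hgoal
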